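/- Let (V,d) be a finite metric space, p ≥ 1 a real number, t ≥ 1 an integer, and let F, F* ⊆ V be nonempty sets with |F| = |F*| = k. Suppose F is t-swap locally optimal for the ℓ_p objective, i.e., for every R ⊆ F and A ⊆ V with |R| = |A| ≤ t we have Φ_p((F \ R) ∪ A) ≥ Φ_p(F). Then Φ_p(F*)^p − (2 + 1/t)·Φ_p(F)^p + (1 + 1/t)·(2·Φ_p(F*) + Φ_p(F))^p ≥ 0. -/

import Mathlib

open Finset

/-- Distance from a client `j` to a nonempty facility set `F`: `min_{f ∈ F} d(j,f)`. -/
noncomputable def distSet {V : Type*} [MetricSpace V] (j : V) (F : Finset V)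
    (hF : F.Nonempty) : ℝ :=
  F.inf' hF fun f => dist j f

/-- The ℓ_p-norm cost of a nonempty facility set `F`:
`Φ_p(F) = (∑_{j ∈ V} d(j,F)^p)^{1/p}`. -/
noncomputable def phiP {V : Type*} [MetricSpace V] [Fintype V] (p : ℝ) (F : Finset V)
    (hF : F.Nonempty) : ℝ :=
  (∑ j : V, distSet j F hF ^ p) ^ (1 / p)

section Aux

variable {V : Type*} [MetricSpace V]

lemma distSet_nonneg (j : V) (F : Finset V) (hF : F.Nonempty) : 0 ≤ distSet j F hF :=
  Finset.le_inf' hF _ fun _ _ => dist_nonneg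

lemma distSet_le (j : V) {F : Finset V} (hF : F.Nonempty) {f : V} (hf : f ∈ F) :
    distSet j F hF ≤ dist j f :=
  Finset.inf'_le _ hf

/-- A nearest point of `F` to `j`. -/
noncomputable def nearestPt (j : V) (F : Finset V) (hF : F.Nonempty) : V :=
  (Finset.exists_mem_eq_inf' hF fun f => dist j f).choose

lemma nearestPt_mem (j : V) (F : Finset V) (hF : F.Nonempty) : nearestPt j F hF ∈ F :=
  (Finset.exists_mem_eq_inf' hF fun f => dist j f).choose_spec.1

lemma distSet_eq_nearest (j : V) (F : Finset V) (hF : F.Nonempty) :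
    distSet j F hF = dist j (nearestPt j F hF) :=
  (Finset.exists_mem_eq_inf' hF fun f => dist j f).choose_spec.2

end Aux

section Sums

variable {V : Type*} [MetricSpace V] [Fintype V]

lemma sum_distSet_nonneg (p : ℝ) (F : Finset V) (hF : F.Nonempty) :
    0 ≤ ∑ j : V, distSet j F hF ^ p :=
  Finset.sum_nonneg fun j _ => Real.rpow_nonneg (distSet_nonneg j F hF) p

lemma phiP_nonneg (p : ℝ) (F : Finset V) (hF : F.Nonempty) : 0 ≤ phiP p F hF :=
  Real.rpow_nonneg (sum_distSet_nonneg p F hF) _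

lemma phiP_rpow (p : ℝ) (hp : p ≠ 0) (F : Finset V) (hF : F.Nonempty) :
    phiP p F hF ^ p = ∑ j : V, distSet j F hF ^ p := by
  rw [phiP, ← Real.rpow_mul (sum_distSet_nonneg p F hF), one_div_mul_cancel hp, Real.rpow_one]

end Sums

/-- Sum of `r` smallest-ish: there is an `r`-subset whose sum is at most `r/n` of the total. -/
lemma exists_sub_avg {α : Type*} [DecidableEq α] (h : α → ℝ) :
    ∀ (n : ℕ) (D : Finset α), D.card = n → (∀ d ∈ D, 0 ≤ h d) → ∀ r, r ≤ n →
    ∃ S, S ⊆ D ∧ S.card = r ∧ (n : ℝ) * ∑ d ∈ S, h d ≤ (r : ℝ) * ∑ d ∈ D, h d := by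
  intro n
  induction n with
  | zero =>
    intro D hcard _ r hr
    interval_cases r
    exact ⟨∅, Finset.empty_subset _, Finset.card_empty, by simp⟩
  | succ n ih =>
    intro D hcard hpos r hr
    rcases eq_or_lt_of_le hr with heq | hlt
    · refine ⟨D, subset_rfl, by omega, ?_⟩
      rw [heq]
    · have hrn : r ≤ n := by omega
      have hDne : D.Nonempty := Finset.card_pos.mp (by omega)
      obtain ⟨d, hdD, hdmax⟩ := Finset.exists_max_image D h hDne
      obtain ⟨S, hSD, hScard, havg⟩ := ih (D.erase d) (by rw [Finset.card_erase_of_mem hdD, hcard]; omega)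
        (fun x hx => hpos x (Finset.mem_of_mem_erase hx)) r hrn
      refine ⟨S, hSD.trans (Finset.erase_subset _ _), hScard, ?_⟩
      have hsplit : ∑ x ∈ D, h x = h d + ∑ x ∈ D.erase d, h x :=
        (Finset.add_sum_erase D h hdD).symm
      have hSd : ∑ x ∈ S, h x ≤ (r : ℝ) * h d := by
        calc ∑ x ∈ S, h x ≤ ∑ _x ∈ S, h d :=
              Finset.sum_le_sum fun x hx =>
                hdmax x (Finset.mem_of_mem_erase (hSD hx))
          _ = (r : ℝ) * h d := by rw [Finset.sum_const, hScard, nsmul_eq_mul]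
      push_cast
      rw [hsplit]
      push_cast at havg
      nlinarith [hSd, havg]

section Main

variable {V : Type*} [MetricSpace V] [Fintype V] [DecidableEq V]

/-- Gain of swapping in optimal facility `fs`: summed over its optimal cluster. -/
noncomputable def gfun (p : ℝ) (F Fstar : Finset V) (hF : F.Nonempty) (hFstar : Fstar.Nonempty)
    (fs : V) : ℝ :=
  ∑ j : V, if nearestPt j Fstar hFstar = fs then
    distSet j Fstar hFstar ^ p - distSet j F hF ^ p else 0

/-- Reassignment cost of removing facility `f`: summed over its cluster. -/
noncomputable def hfun (p : ℝ) (F Fstar : Finset V) (hF : F.Nonempty) (hFstar : Fstar.Nonempty)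
    (f : V) : ℝ :=
  ∑ j : V, if nearestPt j F hF = f then
    (2 * distSet j Fstar hFstar + distSet j F hF) ^ p - distSet j F hF ^ p else 0

lemma hfun_nonneg (p : ℝ) (hp : 1 ≤ p) (F Fstar : Finset V) (hF : F.Nonempty)
    (hFstar : Fstar.Nonempty) (f : V) : 0 ≤ hfun p F Fstar hF hFstar f := by
  refine Finset.sum_nonneg fun j _ => ?_
  split
  · have h1 : distSet j F hF ≤ 2 * distSet j Fstar hFstar + distSet j F hF := by
      nlinarith [distSet_nonneg j Fstar hFstar]
    have := Real.rpow_le_rpow (distSet_nonneg j F hF) h1 (by linarith : (0:ℝ) ≤ p)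
    linarith
  · exact le_rfl


lemma swap_bound (p : ℝ) (hp : 1 ≤ p) (t : ℕ) (F Fstar : Finset V)
    (hF : F.Nonempty) (hFstar : Fstar.Nonempty)
    (hlocal : ∀ R ⊆ F, ∀ A : Finset V, R.card = A.card → A.card ≤ t →
      ∀ hne : ((F \ R) ∪ A).Nonempty, phiP p ((F \ R) ∪ A) hne ≥ phiP p F hF)
    (R A : Finset V) (hR : R ⊆ F) (hAne : A.Nonempty)
    (hcard : R.card = A.card) (hle : A.card ≤ t)
    (hvalid : ∀ fs ∈ Fstar, fs ∉ A → nearestPt fs F hF ∉ R) :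
    0 ≤ (∑ fs ∈ A, gfun p F Fstar hF hFstar fs) + ∑ f ∈ R, hfun p F Fstar hF hFstar f := by
  have hp0 : (0:ℝ) ≤ p := by linarith
  obtain ⟨a, haA⟩ := hAne
  have hne : ((F \ R) ∪ A).Nonempty := ⟨a, Finset.mem_union_right _ haA⟩
  have h1 := hlocal R hR A hcard hle hne
  have hsum : ∑ j : V, distSet j F hF ^ p ≤ ∑ j : V, distSet j ((F \ R) ∪ A) hne ^ p := by
    rw [← phiP_rpow p (by positivity) F hF, ← phiP_rpow p (by positivity) ((F \ R) ∪ A) hne]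
    exact Real.rpow_le_rpow (phiP_nonneg p F hF) h1 hp0
  set O : V → ℝ := fun j => distSet j Fstar hFstar with hO
  set Aj : V → ℝ := fun j => distSet j F hF with hAj
  have key : ∀ j : V, distSet j ((F \ R) ∪ A) hne ^ p ≤ Aj j ^ p +
      ((if nearestPt j Fstar hFstar ∈ A then O j ^ p - Aj j ^ p else 0) +
       (if nearestPt j Fstar hFstar ∈ A then 0 else
          if nearestPt j F hF ∈ R then (2 * O j + Aj j) ^ p - Aj j ^ p else 0)) := by
    intro j
    by_cases hc1 : nearestPt j Fstar hFstar ∈ A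
    · simp only [hc1, if_true]
      have hmem : nearestPt j Fstar hFstar ∈ (F \ R) ∪ A := Finset.mem_union_right _ hc1
      have hd : distSet j ((F \ R) ∪ A) hne ≤ O j := by
        rw [hO]
        calc distSet j ((F \ R) ∪ A) hne ≤ dist j (nearestPt j Fstar hFstar) :=
            distSet_le j hne hmem
          _ = distSet j Fstar hFstar := (distSet_eq_nearest j Fstar hFstar).symm
      have := Real.rpow_le_rpow (distSet_nonneg j _ hne) hd hp0
      linarith
    · simp only [hc1, if_false]
      by_cases hc2 : nearestPt j F hF ∈ R
      · simp only [hc2, if_true]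
        set g := nearestPt (nearestPt j Fstar hFstar) F hF with hg
        have hgF : g ∈ F := nearestPt_mem _ F hF
        have hgR : g ∉ R := hvalid _ (nearestPt_mem j Fstar hFstar) hc1
        have hmem : g ∈ (F \ R) ∪ A :=
          Finset.mem_union_left _ (Finset.mem_sdiff.mpr ⟨hgF, hgR⟩)
        have hd : distSet j ((F \ R) ∪ A) hne ≤ 2 * O j + Aj j := by
          have e1 : distSet j ((F \ R) ∪ A) hne ≤ dist j g := distSet_le j hne hmem
          have e2 : dist j g ≤ dist j (nearestPt j Fstar hFstar) +
              dist (nearestPt j Fstar hFstar) g := dist_triangle _ _ _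
          have e3 : dist (nearestPt j Fstar hFstar) g =
              distSet (nearestPt j Fstar hFstar) F hF :=
            (distSet_eq_nearest _ F hF).symm
          have e4 : distSet (nearestPt j Fstar hFstar) F hF ≤
              dist (nearestPt j Fstar hFstar) (nearestPt j F hF) :=
            distSet_le _ hF (nearestPt_mem j F hF)
          have e5 : dist (nearestPt j Fstar hFstar) (nearestPt j F hF) ≤
              dist (nearestPt j Fstar hFstar) j + dist j (nearestPt j F hF) :=
            dist_triangle _ _ _
          have e6 : dist j (nearestPt j Fstar hFstar) = O j := (distSet_eq_nearest j Fstar hFstar).symm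
          have e7 : dist j (nearestPt j F hF) = Aj j := (distSet_eq_nearest j F hF).symm
          have e8 : dist (nearestPt j Fstar hFstar) j = O j := by rw [dist_comm]; exact e6
          linarith
        have := Real.rpow_le_rpow (distSet_nonneg j _ hne) hd hp0
        linarith
      · simp only [hc2, if_false]
        have hmem : nearestPt j F hF ∈ (F \ R) ∪ A :=
          Finset.mem_union_left _ (Finset.mem_sdiff.mpr ⟨nearestPt_mem j F hF, hc2⟩)
        have hd : distSet j ((F \ R) ∪ A) hne ≤ Aj j := by
          calc distSet j ((F \ R) ∪ A) hne ≤ dist j (nearestPt j F hF) := distSet_le j hne hmem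
            _ = Aj j := (distSet_eq_nearest j F hF).symm
        have := Real.rpow_le_rpow (distSet_nonneg j _ hne) hd hp0
        linarith
  have hsum2 : ∑ j : V, distSet j ((F \ R) ∪ A) hne ^ p ≤
      (∑ j : V, Aj j ^ p) +
      ((∑ j : V, if nearestPt j Fstar hFstar ∈ A then O j ^ p - Aj j ^ p else 0) +
       (∑ j : V, if nearestPt j Fstar hFstar ∈ A then 0 else
          if nearestPt j F hF ∈ R then (2 * O j + Aj j) ^ p - Aj j ^ p else 0)) := by
    rw [← Finset.sum_add_distrib, ← Finset.sum_add_distrib]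
    exact Finset.sum_le_sum fun j _ => key j
  have hg_eq : ∑ fs ∈ A, gfun p F Fstar hF hFstar fs =
      ∑ j : V, if nearestPt j Fstar hFstar ∈ A then O j ^ p - Aj j ^ p else 0 := by
    unfold gfun
    rw [Finset.sum_comm]
    refine Finset.sum_congr rfl fun j _ => ?_
    rw [Finset.sum_ite_eq A (nearestPt j Fstar hFstar) (fun _ => O j ^ p - Aj j ^ p)]
  have hh_ge : ∑ j : V, (if nearestPt j Fstar hFstar ∈ A then 0 else
        if nearestPt j F hF ∈ R then (2 * O j + Aj j) ^ p - Aj j ^ p else 0) ≤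
      ∑ f ∈ R, hfun p F Fstar hF hFstar f := by
    have : ∑ f ∈ R, hfun p F Fstar hF hFstar f =
        ∑ j : V, if nearestPt j F hF ∈ R then (2 * O j + Aj j) ^ p - Aj j ^ p else 0 := by
      unfold hfun
      rw [Finset.sum_comm]
      refine Finset.sum_congr rfl fun j _ => ?_
      rw [Finset.sum_ite_eq R (nearestPt j F hF) (fun _ => (2 * O j + Aj j) ^ p - Aj j ^ p)]
    rw [this]
    refine Finset.sum_le_sum fun j _ => ?_
    by_cases hc1 : nearestPt j Fstar hFstar ∈ A
    · simp only [hc1, if_true]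
      split
      · have h1 : Aj j ≤ 2 * O j + Aj j := by nlinarith [distSet_nonneg j Fstar hFstar]
        have := Real.rpow_le_rpow (distSet_nonneg j F hF) h1 hp0
        linarith
      · exact le_rfl
    · simp only [hc1, if_false]
      exact le_rfl
  have := hsum.trans hsum2
  rw [hg_eq]
  linarith

lemma grand_bound (p : ℝ) (hp : 1 ≤ p) (t : ℕ) (ht : 1 ≤ t) (F Fstar : Finset V)
    (hF : F.Nonempty) (hFstar : Fstar.Nonempty) (hFF : F.card = Fstar.card)
    (hlocal : ∀ R ⊆ F, ∀ A : Finset V, R.card = A.card → A.card ≤ t →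
      ∀ hne : ((F \ R) ∪ A).Nonempty, phiP p ((F \ R) ∪ A) hne ≥ phiP p F hF) :
    0 ≤ (∑ fs ∈ Fstar, gfun p F Fstar hF hFstar fs) +
      (1 + 1 / (t : ℝ)) * ∑ f ∈ F, hfun p F Fstar hF hFstar f := by
  classical
  set g := gfun p F Fstar hF hFstar with hg
  set h := hfun p F Fstar hF hFstar with hh
  have hposh : ∀ f : V, 0 ≤ h f := hfun_nonneg p hp F Fstar hF hFstar
  set η : V → V := fun fs => nearestPt fs F hF with hη
  set cap : V → Finset V := fun f => Fstar.filter (fun fs => η fs = f) with hcap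
  set C : Finset V := F.filter (fun f => (cap f).Nonempty) with hC
  set D : Finset V := F.filter (fun f => ¬ (cap f).Nonempty) with hD
  have hηC : ∀ fs ∈ Fstar, η fs ∈ C := by
    intro fs hfs
    rw [hC, Finset.mem_filter]
    exact ⟨nearestPt_mem fs F hF, ⟨fs, Finset.mem_filter.mpr ⟨hfs, rfl⟩⟩⟩
  have hηD : ∀ d ∈ D, ∀ fs ∈ Fstar, η fs ≠ d := by
    intro d hd fs hfs heq
    rw [hD, Finset.mem_filter] at hd
    exact hd.2 ⟨fs, Finset.mem_filter.mpr ⟨hfs, heq⟩⟩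
  have hDF : D ⊆ F := Finset.filter_subset _ _
  -- cardinality bookkeeping
  have hsum_caps : ∑ f ∈ C, (cap f).card = Fstar.card := by
    have h0 := Finset.sum_fiberwise_of_maps_to hηC (fun _ : V => (1 : ℕ))
    rw [Finset.card_eq_sum_ones Fstar, ← h0]
    exact Finset.sum_congr rfl fun f _ => Finset.card_eq_sum_ones _
  have hCD : C.card + D.card = F.card :=
    Finset.card_filter_add_card_filter_not (p := fun f => (cap f).Nonempty)
  have hcap1 : ∀ f ∈ C, 1 ≤ (cap f).card := by
    intro f hf
    rw [hC, Finset.mem_filter] at hf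
    exact Finset.card_pos.mpr hf.2
  have hDsum : ∑ f ∈ C, ((cap f).card - 1) = D.card := by
    have h1 : ∑ f ∈ C, ((cap f).card - 1 + 1) = ∑ f ∈ C, (cap f).card :=
      Finset.sum_congr rfl fun f hf => by have := hcap1 f hf; omega
    rw [Finset.sum_add_distrib, Finset.sum_const, smul_eq_mul, mul_one] at h1
    omega
  set HD : ℝ := ∑ d ∈ D, h d with hHD
  have hHDnn : 0 ≤ HD := Finset.sum_nonneg fun d _ => hposh d
  set w : V → ℕ := fun f => if (cap f).card ≤ t then (cap f).card - 1 else (cap f).card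
    with hw
  -- the per-group bound
  have per_f : ∀ f ∈ C, 0 ≤ (∑ fs ∈ cap f, g fs) +
      ((if (cap f).card ≤ t then h f else 0) + ((w f : ℝ) / (D.card : ℝ)) * HD) := by
    intro f hf
    have hfF : f ∈ F := (Finset.filter_subset _ _) hf
    have hcapne : (cap f).Nonempty := (Finset.mem_filter.mp hf).2
    have hm1 : 1 ≤ (cap f).card := hcap1 f hf
    have hm1D : (cap f).card - 1 ≤ D.card := by
      rw [← hDsum]
      exact Finset.single_le_sum (f := fun f => (cap f).card - 1)
        (fun i _ => Nat.zero_le _) hf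
    by_cases hmt : (cap f).card ≤ t
    · obtain ⟨S, hSD, hScard, havg⟩ :=
        exists_sub_avg h D.card D rfl (fun d _ => hposh d) ((cap f).card - 1) hm1D
      have hfS : f ∉ S := by
        intro hfs
        have := hSD hfs
        rw [hD, Finset.mem_filter] at this
        exact this.2 hcapne
      have hRcard : (insert f S).card = (cap f).card := by
        rw [Finset.card_insert_of_notMem hfS, hScard]; omega
      have hRF : insert f S ⊆ F := Finset.insert_subset hfF (hSD.trans hDF)
      have hvalid' : ∀ fs ∈ Fstar, fs ∉ cap f → nearestPt fs F hF ∉ insert f S := by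
        intro fs hfs hfsA
        rw [Finset.mem_insert]
        push_neg
        constructor
        · intro heq
          exact hfsA (Finset.mem_filter.mpr ⟨hfs, heq⟩)
        · intro hmem
          exact hηD _ (hSD hmem) fs hfs rfl
      have hsb := swap_bound p hp t F Fstar hF hFstar hlocal (insert f S) (cap f)
        hRF hcapne hRcard hmt hvalid'
      rw [Finset.sum_insert hfS] at hsb
      have hS_le : ∑ d ∈ S, h d ≤ (((cap f).card - 1 : ℕ) : ℝ) / (D.card : ℝ) * HD := by
        rcases Nat.eq_zero_or_pos D.card with h0 | hDpos
        · have hS0 : S = ∅ := Finset.subset_empty.mp (by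
            rwa [Finset.card_eq_zero.mp h0] at hSD)
          rw [hS0, Finset.sum_empty, h0]
          simp
        · have hcpos : (0:ℝ) < (D.card : ℕ) := by exact_mod_cast hDpos
          rw [div_mul_eq_mul_div, le_div_iff₀ hcpos]
          calc (∑ d ∈ S, h d) * (D.card : ℝ) = (D.card : ℝ) * ∑ d ∈ S, h d := by ring
            _ ≤ (((cap f).card - 1 : ℕ) : ℝ) * ∑ d ∈ D, h d := havg
            _ = (((cap f).card - 1 : ℕ) : ℝ) * HD := rfl
      have hwf : w f = (cap f).card - 1 := by rw [hw]; simp [hmt]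
      simp only [hmt, if_true, hwf]
      linarith
    · -- big group: only singleton swaps with lonely facilities
      have hmt' : t < (cap f).card := lt_of_not_ge hmt
      have htD : t ≤ (cap f).card - 1 := by omega
      have hDpos : 0 < D.card := by omega
      have hcpos : (0:ℝ) < (D.card : ℝ) := by exact_mod_cast hDpos
      have hgd : ∀ fs ∈ cap f, - HD / (D.card : ℝ) ≤ g fs := by
        intro fs hfs
        have hfsStar : fs ∈ Fstar := (Finset.filter_subset _ _) hfs
        have hone : ∀ d ∈ D, 0 ≤ g fs + h d := by
          intro d hd
          have hsb := swap_bound p hp t F Fstar hF hFstar hlocal {d} {fs}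
            (Finset.singleton_subset_iff.mpr (hDF hd))
            (Finset.singleton_nonempty fs)
            (by simp) (by simpa using ht)
            (by
              intro fs' hfs' hfs'A
              rw [Finset.mem_singleton]
              exact hηD d hd fs' hfs')
          simpa using hsb
        have hsumd : 0 ≤ (D.card : ℝ) * g fs + HD := by
          have := Finset.sum_nonneg (fun d hd => hone d hd)
          rw [Finset.sum_add_distrib, Finset.sum_const, nsmul_eq_mul] at this
          exact this
        rw [div_le_iff₀ hcpos]
        linarith
      have hsumg : - ((((cap f).card : ℕ) : ℝ) / (D.card : ℝ) * HD) ≤ ∑ fs ∈ cap f, g fs := by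
        calc - ((((cap f).card : ℕ) : ℝ) / (D.card : ℝ) * HD)
            = ∑ _fs ∈ cap f, (- HD / (D.card : ℝ)) := by
              rw [Finset.sum_const, nsmul_eq_mul]
              ring
          _ ≤ ∑ fs ∈ cap f, g fs := Finset.sum_le_sum hgd
      have hwf : w f = (cap f).card := by rw [hw]; simp [hmt]
      simp only [hmt, if_false, hwf]
      linarith
  -- sum the per-group bounds
  have hsum_per : 0 ≤ ∑ f ∈ C, ((∑ fs ∈ cap f, g fs) +
      ((if (cap f).card ≤ t then h f else 0) + ((w f : ℝ) / (D.card : ℝ)) * HD)) :=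
    Finset.sum_nonneg per_f
  rw [Finset.sum_add_distrib, Finset.sum_add_distrib] at hsum_per
  have e1 : ∑ f ∈ C, ∑ fs ∈ cap f, g fs = ∑ fs ∈ Fstar, g fs :=
    Finset.sum_fiberwise_of_maps_to hηC g
  have e2 : ∑ f ∈ C, (if (cap f).card ≤ t then h f else 0) ≤ ∑ f ∈ C, h f :=
    Finset.sum_le_sum fun f _ => by split <;> [exact le_rfl; exact hposh f]
  -- weight bound
  have hW : (t : ℝ) * (∑ f ∈ C, (w f : ℝ)) ≤ ((t : ℝ) + 1) * (D.card : ℝ) := by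
    have hperW : ∀ f ∈ C, (t : ℝ) * (w f : ℝ) ≤ ((t : ℝ) + 1) * (((cap f).card - 1 : ℕ) : ℝ) := by
      intro f hf
      have hm1 : 1 ≤ (cap f).card := hcap1 f hf
      rw [hw]
      by_cases hmt : (cap f).card ≤ t
      · simp only [hmt, if_true]
        have : ((((cap f).card - 1 : ℕ)) : ℝ) ≥ 0 := by positivity
        nlinarith
      · simp only [hmt, if_false]
        have hm : t + 1 ≤ (cap f).card := by omega
        have hmr : (t : ℝ) + 1 ≤ ((cap f).card : ℝ) := by exact_mod_cast hm
        have hcast : (((cap f).card - 1 : ℕ) : ℝ) = ((cap f).card : ℝ) - 1 := by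
          have : 1 ≤ (cap f).card := hm1
          push_cast [this]
          ring
        rw [hcast]
        nlinarith
    calc (t : ℝ) * (∑ f ∈ C, (w f : ℝ)) = ∑ f ∈ C, (t : ℝ) * (w f : ℝ) := by
          rw [Finset.mul_sum]
      _ ≤ ∑ f ∈ C, ((t : ℝ) + 1) * (((cap f).card - 1 : ℕ) : ℝ) :=
          Finset.sum_le_sum hperW
      _ = ((t : ℝ) + 1) * (((∑ f ∈ C, ((cap f).card - 1) : ℕ)) : ℝ) := by
          rw [← Finset.mul_sum]
          push_cast
          ring
      _ = ((t : ℝ) + 1) * (D.card : ℝ) := by rw [hDsum]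
  have htpos : (0:ℝ) < (t : ℝ) := by exact_mod_cast ht
  have e3 : ∑ f ∈ C, ((w f : ℝ) / (D.card : ℝ)) * HD ≤ (1 + 1 / (t : ℝ)) * HD := by
    rcases Nat.eq_zero_or_pos D.card with h0 | hDpos
    · have hD0 : D = ∅ := Finset.card_eq_zero.mp h0
      have : HD = 0 := by rw [hHD, hD0, Finset.sum_empty]
      simp [this]
    · have hcpos : (0:ℝ) < (D.card : ℝ) := by exact_mod_cast hDpos
      have hfrac : (∑ f ∈ C, (w f : ℝ)) / (D.card : ℝ) ≤ 1 + 1 / (t : ℝ) := by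
        rw [div_le_iff₀ hcpos]
        have : 1 + 1 / (t : ℝ) = ((t : ℝ) + 1) / (t : ℝ) := by field_simp
        rw [this, div_mul_eq_mul_div, le_div_iff₀ htpos]
        nlinarith
      calc ∑ f ∈ C, ((w f : ℝ) / (D.card : ℝ)) * HD
          = ((∑ f ∈ C, (w f : ℝ)) / (D.card : ℝ)) * HD := by
            rw [← Finset.sum_mul, ← Finset.sum_div]
      _ ≤ (1 + 1 / (t : ℝ)) * HD := by
            apply mul_le_mul_of_nonneg_right hfrac hHDnn
  -- combine
  have hsplit : ∑ f ∈ F, h f = ∑ f ∈ C, h f + ∑ f ∈ D, h f :=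
    (Finset.sum_filter_add_sum_filter_not F (fun f => (cap f).Nonempty) h).symm
  have hCnn : 0 ≤ ∑ f ∈ C, h f := Finset.sum_nonneg fun f _ => hposh f
  have htinv : 0 ≤ 1 / (t : ℝ) := by positivity
  rw [e1] at hsum_per
  have : ∑ f ∈ C, h f + (1 + 1 / (t : ℝ)) * HD ≤ (1 + 1 / (t : ℝ)) * ∑ f ∈ F, h f := by
    rw [hsplit]
    have : HD = ∑ f ∈ D, h f := rfl
    nlinarith
  linarith

end Main

/-- At a `t`-swap local optimum for the ℓ_p objective,
`Φ_p(F*)^p − (2 + 1/t)·Φ_p(F)^p + (1 + 1/t)·(2·Φ_p(F*) + Φ_p(F))^p ≥ 0`. -/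
theorem lp_t_swap_inequality {V : Type*} [MetricSpace V] [Fintype V] [DecidableEq V]
    (p : ℝ) (hp : 1 ≤ p) (t : ℕ) (ht : 1 ≤ t) (k : ℕ)
    (F Fstar : Finset V) (hF : F.Nonempty) (hFstar : Fstar.Nonempty)
    (hcardF : F.card = k) (hcardFstar : Fstar.card = k)
    (hlocal : ∀ R ⊆ F, ∀ A : Finset V, R.card = A.card → A.card ≤ t →
      ∀ hne : ((F \ R) ∪ A).Nonempty, phiP p ((F \ R) ∪ A) hne ≥ phiP p F hF) :
    phiP p Fstar hFstar ^ p - (2 + 1 / (t : ℝ)) * phiP p F hF ^ p +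
        (1 + 1 / (t : ℝ)) * (2 * phiP p Fstar hFstar + phiP p F hF) ^ p ≥ 0 := by
  have hpne : p ≠ 0 := by positivity
  have hp0 : (0:ℝ) ≤ p := by linarith
  set O : V → ℝ := fun j => distSet j Fstar hFstar with hO
  set Aj : V → ℝ := fun j => distSet j F hF with hAj
  set Q : ℝ := ∑ j : V, (2 * O j + Aj j) ^ p with hQ
  have hgrand := grand_bound p hp t ht F Fstar hF hFstar (by rw [hcardF, hcardFstar]) hlocal
  -- identify the two sums
  have eG : ∑ fs ∈ Fstar, gfun p F Fstar hF hFstar fs =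
      phiP p Fstar hFstar ^ p - phiP p F hF ^ p := by
    unfold gfun
    rw [Finset.sum_comm]
    have : ∀ j ∈ (Finset.univ : Finset V), (∑ fs ∈ Fstar,
        if nearestPt j Fstar hFstar = fs then
          distSet j Fstar hFstar ^ p - distSet j F hF ^ p else 0) =
        distSet j Fstar hFstar ^ p - distSet j F hF ^ p := by
      intro j _
      rw [Finset.sum_ite_eq Fstar (nearestPt j Fstar hFstar)
        (fun _ => distSet j Fstar hFstar ^ p - distSet j F hF ^ p)]
      simp [nearestPt_mem j Fstar hFstar]
    rw [Finset.sum_congr rfl this, Finset.sum_sub_distrib,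
      phiP_rpow p hpne Fstar hFstar, phiP_rpow p hpne F hF]
  have eH : ∑ f ∈ F, hfun p F Fstar hF hFstar f = Q - phiP p F hF ^ p := by
    unfold hfun
    rw [Finset.sum_comm]
    have : ∀ j ∈ (Finset.univ : Finset V), (∑ f ∈ F,
        if nearestPt j F hF = f then
          (2 * distSet j Fstar hFstar + distSet j F hF) ^ p - distSet j F hF ^ p else 0) =
        (2 * distSet j Fstar hFstar + distSet j F hF) ^ p - distSet j F hF ^ p := by
      intro j _
      rw [Finset.sum_ite_eq F (nearestPt j F hF)
        (fun _ => (2 * distSet j Fstar hFstar + distSet j F hF) ^ p - distSet j F hF ^ p)]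
      simp [nearestPt_mem j F hF]
    rw [Finset.sum_congr rfl this, Finset.sum_sub_distrib, phiP_rpow p hpne F hF]
  rw [eG, eH] at hgrand
  -- Minkowski: Q ≤ (2 Φ* + Φ)^p
  have hQnn : 0 ≤ Q := Finset.sum_nonneg fun j _ => Real.rpow_nonneg
    (by nlinarith [distSet_nonneg j Fstar hFstar, distSet_nonneg j F hF]) p
  have hMink : Q ≤ (2 * phiP p Fstar hFstar + phiP p F hF) ^ p := by
    have h1 : (Q : ℝ) ^ (1/p) ≤ 2 * phiP p Fstar hFstar + phiP p F hF := by
      have hlp := Real.Lp_add_le_of_nonneg (s := (Finset.univ : Finset V))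
        (f := fun j => 2 * O j) (g := fun j => Aj j) hp
        (fun j _ => by
          show (0:ℝ) ≤ 2 * O j
          nlinarith [distSet_nonneg j Fstar hFstar])
        (fun j _ => distSet_nonneg j F hF)
      have e2O : (∑ j : V, (2 * O j) ^ p) ^ (1/p) = 2 * phiP p Fstar hFstar := by
        have : ∀ j ∈ (Finset.univ : Finset V), (2 * O j) ^ p = 2 ^ p * O j ^ p :=
          fun j _ => Real.mul_rpow (by norm_num) (distSet_nonneg j Fstar hFstar)
        rw [Finset.sum_congr rfl this, ← Finset.mul_sum,
          Real.mul_rpow (by positivity) (sum_distSet_nonneg p Fstar hFstar),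
          ← Real.rpow_mul (by norm_num : (0:ℝ) ≤ 2), mul_one_div_cancel hpne,
          Real.rpow_one, phiP]
      have eA : (∑ j : V, Aj j ^ p) ^ (1/p) = phiP p F hF := rfl
      calc Q ^ (1/p) ≤ (∑ j : V, (2 * O j) ^ p) ^ (1/p) + (∑ j : V, Aj j ^ p) ^ (1/p) := hlp
        _ = 2 * phiP p Fstar hFstar + phiP p F hF := by rw [e2O, eA]
    have h2 : (Q ^ (1/p)) ^ p = Q := by
      rw [← Real.rpow_mul hQnn, one_div_mul_cancel hpne, Real.rpow_one]
    calc Q = (Q ^ (1/p)) ^ p := h2.symm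
      _ ≤ (2 * phiP p Fstar hFstar + phiP p F hF) ^ p :=
        Real.rpow_le_rpow (Real.rpow_nonneg hQnn _) h1 hp0
  have htinv : (0:ℝ) ≤ 1 + 1 / (t : ℝ) := by positivity
  nlinarith [hgrand, hMink, htinv]
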